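/- For ℓ ∈ ℕ define a_ℓ(z) := (1/(2^ℓ ℓ!)) ∫₀^∞ s^{2ℓ+1} e^{−s²/2} / √(s² + z²) ds and b_ℓ(z) := (1/(2^ℓ ℓ!)) ∫₀^∞ s^{2ℓ+1} e^{−s²/2} √(s² + z²) ds. Then for every z ∈ ℝ and every ℓ, a_ℓ(z) ≥ a_{ℓ+1}(z) and b_ℓ(z) ≤ b_{ℓ+1}(z). -/

import Mathlib

open MeasureTheory

section AuxALBL
open Set Filter Real

private lemma expHalf (x : ℝ) : Real.exp (-x ^ 2 / 2) = Real.exp (-(1/2) * x ^ 2) := by ring_nf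

private lemma intPow (k : ℕ) :
    IntegrableOn (fun s : ℝ => s ^ k * Real.exp (-s ^ 2 / 2)) (Set.Ioi 0) := by
  have h := integrableOn_rpow_mul_exp_neg_mul_sq (b := 1/2) one_half_pos
      (s := (k : ℝ)) (by exact lt_of_lt_of_le (by norm_num) (Nat.cast_nonneg k))
  simp_rw [Real.rpow_natCast, ← expHalf] at h
  exact h

private lemma tendPow (k : ℕ) :
    Tendsto (fun s : ℝ => s ^ k * Real.exp (-s ^ 2 / 2)) atTop (nhds 0) := by
  have h := (rpow_mul_exp_neg_mul_sq_isLittleO_exp_neg one_half_pos (k : ℝ)).tendsto_zero_of_tendsto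
      (tendsto_exp_atBot.comp <| tendsto_id.const_mul_atTop_of_neg (neg_lt_zero.mpr one_half_pos))
  simp_rw [Real.rpow_natCast, ← expHalf] at h
  exact h

private lemma le_sqrtP {z s : ℝ} (hs : 0 ≤ s) : s ≤ Real.sqrt (s ^ 2 + z ^ 2) := by
  have h := Real.sqrt_le_sqrt (by nlinarith : s ^ 2 ≤ s ^ 2 + z ^ 2)
  rwa [Real.sqrt_sq hs] at h

private lemma sqrtP_le {z s : ℝ} (hs : 0 ≤ s) : Real.sqrt (s ^ 2 + z ^ 2) ≤ s + |z| := by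
  rw [show s + |z| = Real.sqrt ((s + |z|) ^ 2) from (Real.sqrt_sq (by positivity)).symm]
  exact Real.sqrt_le_sqrt (by nlinarith [abs_nonneg z, sq_abs z])

private lemma boundA (z : ℝ) (k : ℕ) {s : ℝ} (hs : 0 < s) :
    s ^ (k + 1) * Real.exp (-s ^ 2 / 2) / Real.sqrt (s ^ 2 + z ^ 2)
      ≤ s ^ k * Real.exp (-s ^ 2 / 2) := by
  have hR : s ≤ Real.sqrt (s ^ 2 + z ^ 2) := le_sqrtP hs.le
  rw [div_le_iff₀ (lt_of_lt_of_le hs hR), pow_succ]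
  have h0 : (0:ℝ) ≤ s ^ k * Real.exp (-s ^ 2 / 2) := by positivity
  nlinarith [mul_le_mul_of_nonneg_left hR h0]

private lemma boundA3 (z : ℝ) (k : ℕ) {s : ℝ} (hs : 0 < s) :
    s ^ (k + 3) * Real.exp (-s ^ 2 / 2) / ((s ^ 2 + z ^ 2) * Real.sqrt (s ^ 2 + z ^ 2))
      ≤ s ^ k * Real.exp (-s ^ 2 / 2) := by
  have hR : s ≤ Real.sqrt (s ^ 2 + z ^ 2) := le_sqrtP hs.le
  have hQ : s ^ 2 ≤ s ^ 2 + z ^ 2 := by nlinarith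
  have hpos : 0 < s ^ 2 * s := by positivity
  have hden : s ^ 2 * s ≤ (s ^ 2 + z ^ 2) * Real.sqrt (s ^ 2 + z ^ 2) :=
    mul_le_mul hQ hR hs.le (by nlinarith)
  calc s ^ (k + 3) * Real.exp (-s ^ 2 / 2) / ((s ^ 2 + z ^ 2) * Real.sqrt (s ^ 2 + z ^ 2))
      ≤ s ^ (k + 3) * Real.exp (-s ^ 2 / 2) / (s ^ 2 * s) :=
        div_le_div_of_nonneg_left (by positivity) hpos hden
    _ = s ^ k * Real.exp (-s ^ 2 / 2) := by field_simp; ring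

-- integrability of the three kinds of integrands
private lemma intA (z : ℝ) (k : ℕ) :
    IntegrableOn (fun s : ℝ => s ^ (k + 1) * Real.exp (-s ^ 2 / 2) / Real.sqrt (s ^ 2 + z ^ 2))
      (Set.Ioi 0) := by
  apply Integrable.mono' (intPow k)
  · apply Measurable.aestronglyMeasurable
    fun_prop
  · filter_upwards [ae_restrict_mem measurableSet_Ioi] with s hs
    rw [Real.norm_eq_abs, abs_of_nonneg (div_nonneg
      (mul_nonneg (pow_nonneg hs.le _) (Real.exp_pos _).le) (Real.sqrt_nonneg _))]
    exact boundA z k hs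

private lemma intA3 (z : ℝ) (k : ℕ) :
    IntegrableOn (fun s : ℝ =>
        s ^ (k + 3) * Real.exp (-s ^ 2 / 2) / ((s ^ 2 + z ^ 2) * Real.sqrt (s ^ 2 + z ^ 2)))
      (Set.Ioi 0) := by
  apply Integrable.mono' (intPow k)
  · apply Measurable.aestronglyMeasurable
    fun_prop
  · filter_upwards [ae_restrict_mem measurableSet_Ioi] with s hs
    rw [Real.norm_eq_abs, abs_of_nonneg (div_nonneg
      (mul_nonneg (pow_nonneg hs.le _) (Real.exp_pos _).le)
      (mul_nonneg (by positivity) (Real.sqrt_nonneg _)))]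
    exact boundA3 z k hs

private lemma intB (z : ℝ) (k : ℕ) :
    IntegrableOn (fun s : ℝ => s ^ k * Real.exp (-s ^ 2 / 2) * Real.sqrt (s ^ 2 + z ^ 2))
      (Set.Ioi 0) := by
  apply Integrable.mono' ((intPow (k + 1)).add ((intPow k).const_mul |z|))
  · apply Measurable.aestronglyMeasurable
    fun_prop
  · filter_upwards [ae_restrict_mem measurableSet_Ioi] with s hs
    rw [Real.norm_eq_abs, abs_of_nonneg (mul_nonneg
      (mul_nonneg (pow_nonneg hs.le _) (Real.exp_pos _).le) (Real.sqrt_nonneg _))]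
    have h1 : Real.sqrt (s ^ 2 + z ^ 2) ≤ s + |z| := sqrtP_le (le_of_lt hs)
    have h0 : (0:ℝ) ≤ s ^ k * Real.exp (-s ^ 2 / 2) :=
      mul_nonneg (pow_nonneg hs.le _) (Real.exp_pos _).le
    calc s ^ k * Real.exp (-s ^ 2 / 2) * Real.sqrt (s ^ 2 + z ^ 2)
        ≤ s ^ k * Real.exp (-s ^ 2 / 2) * (s + |z|) :=
          mul_le_mul_of_nonneg_left h1 h0
      _ = s ^ (k + 1) * Real.exp (-s ^ 2 / 2) + |z| * (s ^ k * Real.exp (-s ^ 2 / 2)) := by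
          rw [pow_succ]; ring
private lemma derivGa (z : ℝ) (ℓ : ℕ) {s : ℝ} (hs : 0 < s) :
    HasDerivAt (fun s : ℝ => s ^ (2 * ℓ + 2) * Real.exp (-s ^ 2 / 2) / Real.sqrt (s ^ 2 + z ^ 2))
      ((2 * ℓ + 2) * (s ^ (2 * ℓ + 1) * Real.exp (-s ^ 2 / 2) / Real.sqrt (s ^ 2 + z ^ 2))
        - s ^ (2 * ℓ + 3) * Real.exp (-s ^ 2 / 2) / Real.sqrt (s ^ 2 + z ^ 2)
        - s ^ (2 * ℓ + 3) * Real.exp (-s ^ 2 / 2) / ((s ^ 2 + z ^ 2) * Real.sqrt (s ^ 2 + z ^ 2)))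
      s := by
  have hQ : 0 < s ^ 2 + z ^ 2 := by positivity
  have hR : 0 < Real.sqrt (s ^ 2 + z ^ 2) := Real.sqrt_pos.mpr hQ
  have hRq : Real.sqrt (s ^ 2 + z ^ 2) ^ 2 = s ^ 2 + z ^ 2 := Real.sq_sqrt hQ.le
  have hexp : HasDerivAt (fun x : ℝ => Real.exp (-x ^ 2 / 2))
      (Real.exp (-s ^ 2 / 2) * (-(2 * s ^ 1) / 2)) s := (((hasDerivAt_pow 2 s).neg).div_const 2).exp
  have hu : HasDerivAt (fun x : ℝ => x ^ (2 * ℓ + 2) * Real.exp (-x ^ 2 / 2))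
      ((2 * ℓ + 2 : ℕ) * s ^ (2 * ℓ + 1) * Real.exp (-s ^ 2 / 2)
        + s ^ (2 * ℓ + 2) * (Real.exp (-s ^ 2 / 2) * (-(2 * s ^ 1) / 2))) s :=
    (hasDerivAt_pow (2 * ℓ + 2) s).mul hexp
  have hv : HasDerivAt (fun x : ℝ => Real.sqrt (x ^ 2 + z ^ 2))
      ((2 * s ^ 1) / (2 * Real.sqrt (s ^ 2 + z ^ 2))) s :=
    ((hasDerivAt_pow 2 s).add_const (z ^ 2)).sqrt hQ.ne'
  have h := hu.div hv hR.ne'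
  refine h.congr_deriv ?_
  set r := Real.sqrt (s ^ 2 + z ^ 2) with hr
  rw [← hRq]
  field_simp
  push_cast
  ring

private lemma derivGb (z : ℝ) (ℓ : ℕ) {s : ℝ} (hs : 0 < s) :
    HasDerivAt (fun s : ℝ => s ^ (2 * ℓ + 2) * Real.exp (-s ^ 2 / 2) * Real.sqrt (s ^ 2 + z ^ 2))
      ((2 * ℓ + 2) * (s ^ (2 * ℓ + 1) * Real.exp (-s ^ 2 / 2) * Real.sqrt (s ^ 2 + z ^ 2))
        - s ^ (2 * ℓ + 3) * Real.exp (-s ^ 2 / 2) * Real.sqrt (s ^ 2 + z ^ 2)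
        + s ^ (2 * ℓ + 3) * Real.exp (-s ^ 2 / 2) / Real.sqrt (s ^ 2 + z ^ 2))
      s := by
  have hQ : 0 < s ^ 2 + z ^ 2 := by positivity
  have hR : 0 < Real.sqrt (s ^ 2 + z ^ 2) := Real.sqrt_pos.mpr hQ
  have hRq : Real.sqrt (s ^ 2 + z ^ 2) ^ 2 = s ^ 2 + z ^ 2 := Real.sq_sqrt hQ.le
  have hexp : HasDerivAt (fun x : ℝ => Real.exp (-x ^ 2 / 2))
      (Real.exp (-s ^ 2 / 2) * (-(2 * s ^ 1) / 2)) s := (((hasDerivAt_pow 2 s).neg).div_const 2).exp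
  have hu : HasDerivAt (fun x : ℝ => x ^ (2 * ℓ + 2) * Real.exp (-x ^ 2 / 2))
      ((2 * ℓ + 2 : ℕ) * s ^ (2 * ℓ + 1) * Real.exp (-s ^ 2 / 2)
        + s ^ (2 * ℓ + 2) * (Real.exp (-s ^ 2 / 2) * (-(2 * s ^ 1) / 2))) s :=
    (hasDerivAt_pow (2 * ℓ + 2) s).mul hexp
  have hv : HasDerivAt (fun x : ℝ => Real.sqrt (x ^ 2 + z ^ 2))
      ((2 * s ^ 1) / (2 * Real.sqrt (s ^ 2 + z ^ 2))) s :=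
    ((hasDerivAt_pow 2 s).add_const (z ^ 2)).sqrt hQ.ne'
  have h := hu.mul hv
  refine h.congr_deriv ?_
  set r := Real.sqrt (s ^ 2 + z ^ 2) with hr
  field_simp
  push_cast
  ring

private lemma partA (z : ℝ) (ℓ : ℕ) :
    (∫ s in Set.Ioi (0:ℝ), s ^ (2 * ℓ + 3) * Real.exp (-s ^ 2 / 2) / Real.sqrt (s ^ 2 + z ^ 2))
      ≤ (2 * ℓ + 2) *
        ∫ s in Set.Ioi (0:ℝ), s ^ (2 * ℓ + 1) * Real.exp (-s ^ 2 / 2) / Real.sqrt (s ^ 2 + z ^ 2) := by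
  have hf1 := intA z (2 * ℓ)
  have hf2 : IntegrableOn
      (fun s : ℝ => s ^ (2 * ℓ + 3) * Real.exp (-s ^ 2 / 2) / Real.sqrt (s ^ 2 + z ^ 2))
      (Set.Ioi 0) := intA z (2 * ℓ + 2)
  have hf3 := intA3 z (2 * ℓ)
  set Ga : ℝ → ℝ := fun s => s ^ (2 * ℓ + 2) * Real.exp (-s ^ 2 / 2) / Real.sqrt (s ^ 2 + z ^ 2)
    with hGa
  have hGa0 : Ga 0 = 0 := by
    simp [hGa, zero_pow (by omega : 2 * ℓ + 2 ≠ 0)]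
  have hcont : ContinuousWithinAt Ga (Set.Ici 0) 0 := by
    unfold ContinuousWithinAt
    rw [hGa0]
    apply squeeze_zero' (g := fun s : ℝ => s ^ (2 * ℓ + 1))
    · filter_upwards [self_mem_nhdsWithin] with s (hs : s ∈ Set.Ici (0:ℝ))
      exact div_nonneg (mul_nonneg (pow_nonneg hs _) (Real.exp_pos _).le) (Real.sqrt_nonneg _)
    · filter_upwards [self_mem_nhdsWithin] with s (hs : s ∈ Set.Ici (0:ℝ))
      rcases eq_or_lt_of_le (Set.mem_Ici.mp hs) with h | h
      · simp [hGa, ← h, zero_pow (by omega : 2 * ℓ + 2 ≠ 0),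
          zero_pow (by omega : 2 * ℓ + 1 ≠ 0)]
      · have h1 := boundA z (2 * ℓ + 1) h
        have h2 : Real.exp (-s ^ 2 / 2) ≤ 1 := Real.exp_le_one_iff.mpr (by nlinarith)
        have h3 : s ^ (2 * ℓ + 1) * Real.exp (-s ^ 2 / 2) ≤ s ^ (2 * ℓ + 1) :=
          mul_le_of_le_one_right (pow_nonneg h.le _) h2
        exact le_trans h1 h3
    · have := ((continuous_pow (2 * ℓ + 1)).tendsto (0:ℝ)).mono_left
        (nhdsWithin_le_nhds (s := Set.Ici (0:ℝ)))
      simpa [zero_pow (by omega : 2 * ℓ + 1 ≠ 0)] using this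
  have htend : Tendsto Ga atTop (nhds 0) := by
    apply squeeze_zero' (g := fun s : ℝ => s ^ (2 * ℓ + 1) * Real.exp (-s ^ 2 / 2))
    · filter_upwards [eventually_gt_atTop (0:ℝ)] with s hs
      exact div_nonneg (mul_nonneg (pow_nonneg hs.le _) (Real.exp_pos _).le) (Real.sqrt_nonneg _)
    · filter_upwards [eventually_gt_atTop (0:ℝ)] with s hs
      exact boundA z (2 * ℓ + 1) hs
    · exact tendPow (2 * ℓ + 1)
  have hint : IntegrableOn (fun s : ℝ =>
      (2 * ℓ + 2) * (s ^ (2 * ℓ + 1) * Real.exp (-s ^ 2 / 2) / Real.sqrt (s ^ 2 + z ^ 2))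
        - s ^ (2 * ℓ + 3) * Real.exp (-s ^ 2 / 2) / Real.sqrt (s ^ 2 + z ^ 2)
        - s ^ (2 * ℓ + 3) * Real.exp (-s ^ 2 / 2) / ((s ^ 2 + z ^ 2) * Real.sqrt (s ^ 2 + z ^ 2)))
      (Set.Ioi 0) := ((hf1.const_mul _).sub hf2).sub hf3
  have key := integral_Ioi_of_hasDerivAt_of_tendsto hcont
    (fun x hx => derivGa z ℓ hx) hint htend
  rw [hGa0, sub_zero] at key
  have hc1 : IntegrableOn (fun s : ℝ =>
      (2 * (ℓ:ℝ) + 2) * (s ^ (2 * ℓ + 1) * Real.exp (-s ^ 2 / 2) / Real.sqrt (s ^ 2 + z ^ 2)))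
      (Set.Ioi 0) := hf1.const_mul _
  have hAB : IntegrableOn (fun s : ℝ =>
      (2 * (ℓ:ℝ) + 2) * (s ^ (2 * ℓ + 1) * Real.exp (-s ^ 2 / 2) / Real.sqrt (s ^ 2 + z ^ 2))
        - s ^ (2 * ℓ + 3) * Real.exp (-s ^ 2 / 2) / Real.sqrt (s ^ 2 + z ^ 2))
      (Set.Ioi 0) := hc1.sub hf2
  rw [integral_sub hAB hf3, integral_sub hc1 hf2, integral_const_mul] at key
  have hI3 : 0 ≤ ∫ s in Set.Ioi (0:ℝ),
      s ^ (2 * ℓ + 3) * Real.exp (-s ^ 2 / 2) / ((s ^ 2 + z ^ 2) * Real.sqrt (s ^ 2 + z ^ 2)) := by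
    apply setIntegral_nonneg measurableSet_Ioi
    intro s hs
    exact div_nonneg (mul_nonneg (pow_nonneg (le_of_lt hs) _) (Real.exp_pos _).le)
      (mul_nonneg (by positivity) (Real.sqrt_nonneg _))
  linarith

private lemma partB (z : ℝ) (ℓ : ℕ) :
    (2 * ℓ + 2) *
        (∫ s in Set.Ioi (0:ℝ), s ^ (2 * ℓ + 1) * Real.exp (-s ^ 2 / 2) * Real.sqrt (s ^ 2 + z ^ 2))
      ≤ ∫ s in Set.Ioi (0:ℝ), s ^ (2 * ℓ + 3) * Real.exp (-s ^ 2 / 2) * Real.sqrt (s ^ 2 + z ^ 2) := by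
  have hg1 := intB z (2 * ℓ + 1)
  have hg2 := intB z (2 * ℓ + 3)
  have hg3 : IntegrableOn
      (fun s : ℝ => s ^ (2 * ℓ + 3) * Real.exp (-s ^ 2 / 2) / Real.sqrt (s ^ 2 + z ^ 2))
      (Set.Ioi 0) := intA z (2 * ℓ + 2)
  set Gb : ℝ → ℝ := fun s => s ^ (2 * ℓ + 2) * Real.exp (-s ^ 2 / 2) * Real.sqrt (s ^ 2 + z ^ 2)
    with hGb
  have hGb0 : Gb 0 = 0 := by
    simp [hGb, zero_pow (by omega : 2 * ℓ + 2 ≠ 0)]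
  have hcont : ContinuousWithinAt Gb (Set.Ici 0) 0 := by
    apply Continuous.continuousWithinAt
    fun_prop
  have htend : Tendsto Gb atTop (nhds 0) := by
    have hlim : Tendsto (fun s : ℝ => s ^ (2 * ℓ + 3) * Real.exp (-s ^ 2 / 2)
        + |z| * (s ^ (2 * ℓ + 2) * Real.exp (-s ^ 2 / 2))) atTop (nhds 0) := by
      have := (tendPow (2 * ℓ + 3)).add ((tendPow (2 * ℓ + 2)).const_mul |z|)
      simpa using this
    apply squeeze_zero' (g := fun s : ℝ => s ^ (2 * ℓ + 3) * Real.exp (-s ^ 2 / 2)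
        + |z| * (s ^ (2 * ℓ + 2) * Real.exp (-s ^ 2 / 2)))
    · filter_upwards [eventually_gt_atTop (0:ℝ)] with s hs
      exact mul_nonneg (mul_nonneg (pow_nonneg hs.le _) (Real.exp_pos _).le) (Real.sqrt_nonneg _)
    · filter_upwards [eventually_gt_atTop (0:ℝ)] with s hs
      have h1 : Real.sqrt (s ^ 2 + z ^ 2) ≤ s + |z| := sqrtP_le hs.le
      have h0 : (0:ℝ) ≤ s ^ (2 * ℓ + 2) * Real.exp (-s ^ 2 / 2) :=
        mul_nonneg (pow_nonneg hs.le _) (Real.exp_pos _).le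
      calc Gb s ≤ s ^ (2 * ℓ + 2) * Real.exp (-s ^ 2 / 2) * (s + |z|) :=
            mul_le_mul_of_nonneg_left h1 h0
        _ = s ^ (2 * ℓ + 3) * Real.exp (-s ^ 2 / 2)
            + |z| * (s ^ (2 * ℓ + 2) * Real.exp (-s ^ 2 / 2)) := by
            rw [show 2 * ℓ + 3 = (2 * ℓ + 2) + 1 from rfl, pow_succ]; ring
    · exact hlim
  have hint : IntegrableOn (fun s : ℝ =>
      (2 * ℓ + 2) * (s ^ (2 * ℓ + 1) * Real.exp (-s ^ 2 / 2) * Real.sqrt (s ^ 2 + z ^ 2))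
        - s ^ (2 * ℓ + 3) * Real.exp (-s ^ 2 / 2) * Real.sqrt (s ^ 2 + z ^ 2)
        + s ^ (2 * ℓ + 3) * Real.exp (-s ^ 2 / 2) / Real.sqrt (s ^ 2 + z ^ 2))
      (Set.Ioi 0) := ((hg1.const_mul _).sub hg2).add hg3
  have key := integral_Ioi_of_hasDerivAt_of_tendsto hcont
    (fun x hx => derivGb z ℓ hx) hint htend
  rw [hGb0, sub_zero] at key
  have hc1 : IntegrableOn (fun s : ℝ =>
      (2 * (ℓ:ℝ) + 2) * (s ^ (2 * ℓ + 1) * Real.exp (-s ^ 2 / 2) * Real.sqrt (s ^ 2 + z ^ 2)))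
      (Set.Ioi 0) := hg1.const_mul _
  have hAB : IntegrableOn (fun s : ℝ =>
      (2 * (ℓ:ℝ) + 2) * (s ^ (2 * ℓ + 1) * Real.exp (-s ^ 2 / 2) * Real.sqrt (s ^ 2 + z ^ 2))
        - s ^ (2 * ℓ + 3) * Real.exp (-s ^ 2 / 2) * Real.sqrt (s ^ 2 + z ^ 2))
      (Set.Ioi 0) := hc1.sub hg2
  rw [integral_add hAB hg3, integral_sub hc1 hg2, integral_const_mul] at key
  have hI3 : 0 ≤ ∫ s in Set.Ioi (0:ℝ),
      s ^ (2 * ℓ + 3) * Real.exp (-s ^ 2 / 2) / Real.sqrt (s ^ 2 + z ^ 2) := by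
    apply setIntegral_nonneg measurableSet_Ioi
    intro s hs
    exact div_nonneg (mul_nonneg (pow_nonneg (le_of_lt hs) _) (Real.exp_pos _).le)
      (Real.sqrt_nonneg _)
  linarith

end AuxALBL

/-- `a_ℓ(z) = (2^ℓ ℓ!)⁻¹ ∫₀^∞ s^{2ℓ+1} e^{−s²/2}/√(s²+z²) ds`. -/
noncomputable def aL (ℓ : ℕ) (z : ℝ) : ℝ :=
  (1 / (2 ^ ℓ * (Nat.factorial ℓ : ℝ))) *
    ∫ s in Set.Ioi (0:ℝ), s ^ (2 * ℓ + 1) * Real.exp (-s ^ 2 / 2) / Real.sqrt (s ^ 2 + z ^ 2)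

/-- `b_ℓ(z) = (2^ℓ ℓ!)⁻¹ ∫₀^∞ s^{2ℓ+1} e^{−s²/2} √(s²+z²) ds`. -/
noncomputable def bL (ℓ : ℕ) (z : ℝ) : ℝ :=
  (1 / (2 ^ ℓ * (Nat.factorial ℓ : ℝ))) *
    ∫ s in Set.Ioi (0:ℝ), s ^ (2 * ℓ + 1) * Real.exp (-s ^ 2 / 2) * Real.sqrt (s ^ 2 + z ^ 2)

/-- For every `z` and every `ℓ`, `a_ℓ(z) ≥ a_{ℓ+1}(z)` and `b_ℓ(z) ≤ b_{ℓ+1}(z)`. -/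
theorem aL_antitone_bL_monotone (z : ℝ) (ℓ : ℕ) :
    aL ℓ z ≥ aL (ℓ + 1) z ∧ bL ℓ z ≤ bL (ℓ + 1) z := by
  have hfac : (0:ℝ) < (Nat.factorial ℓ : ℝ) := by exact_mod_cast ℓ.factorial_pos
  have hfac1 : (0:ℝ) < (Nat.factorial (ℓ + 1) : ℝ) := by exact_mod_cast (ℓ + 1).factorial_pos
  have h1 : (0:ℝ) < 2 ^ ℓ * (Nat.factorial ℓ : ℝ) := mul_pos (by positivity) hfac
  have h2 : (0:ℝ) < 2 ^ (ℓ + 1) * (Nat.factorial (ℓ + 1) : ℝ) := mul_pos (by positivity) hfac1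
  have hcast : ((Nat.factorial (ℓ + 1) : ℝ)) = ((ℓ : ℝ) + 1) * (Nat.factorial ℓ : ℝ) := by
    rw [Nat.factorial_succ]; push_cast; ring
  constructor
  · have hA := partA z ℓ
    rw [ge_iff_le, aL, aL]
    simp only [show 2 * (ℓ + 1) + 1 = 2 * ℓ + 3 from by ring]
    rw [one_div, inv_mul_eq_div, one_div, inv_mul_eq_div, div_le_div_iff₀ h2 h1]
    calc (∫ s in Set.Ioi (0:ℝ),
            s ^ (2 * ℓ + 3) * Real.exp (-s ^ 2 / 2) / Real.sqrt (s ^ 2 + z ^ 2))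
            * (2 ^ ℓ * (Nat.factorial ℓ : ℝ))
        ≤ ((2 * (ℓ:ℝ) + 2) * ∫ s in Set.Ioi (0:ℝ),
            s ^ (2 * ℓ + 1) * Real.exp (-s ^ 2 / 2) / Real.sqrt (s ^ 2 + z ^ 2))
            * (2 ^ ℓ * (Nat.factorial ℓ : ℝ)) := mul_le_mul_of_nonneg_right hA h1.le
      _ = (∫ s in Set.Ioi (0:ℝ),
            s ^ (2 * ℓ + 1) * Real.exp (-s ^ 2 / 2) / Real.sqrt (s ^ 2 + z ^ 2))
            * (2 ^ (ℓ + 1) * (Nat.factorial (ℓ + 1) : ℝ)) := by rw [hcast]; ring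
  · have hB := partB z ℓ
    rw [bL, bL]
    simp only [show 2 * (ℓ + 1) + 1 = 2 * ℓ + 3 from by ring]
    rw [one_div, inv_mul_eq_div, one_div, inv_mul_eq_div, div_le_div_iff₀ h1 h2]
    calc (∫ s in Set.Ioi (0:ℝ),
            s ^ (2 * ℓ + 1) * Real.exp (-s ^ 2 / 2) * Real.sqrt (s ^ 2 + z ^ 2))
            * (2 ^ (ℓ + 1) * (Nat.factorial (ℓ + 1) : ℝ))
        = ((2 * (ℓ:ℝ) + 2) * ∫ s in Set.Ioi (0:ℝ),
            s ^ (2 * ℓ + 1) * Real.exp (-s ^ 2 / 2) * Real.sqrt (s ^ 2 + z ^ 2))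
            * (2 ^ ℓ * (Nat.factorial ℓ : ℝ)) := by rw [hcast]; ring
      _ ≤ (∫ s in Set.Ioi (0:ℝ),
            s ^ (2 * ℓ + 3) * Real.exp (-s ^ 2 / 2) * Real.sqrt (s ^ 2 + z ^ 2))
            * (2 ^ ℓ * (Nat.factorial ℓ : ℝ)) := mul_le_mul_of_nonneg_right hB h1.le
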